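/- arXiv:0706.0611 — 2 statements merged into one kernel-verified Lean document; each statement's English description precedes it below -/
import Mathlib

section
/- (Lemma bounding the product representation.) Fix θ > 2, γ ∈ (0,1) and δ > 0. There exists a constant C = C(θ,γ,δ) > 0 such that for all K₂, K₃ > 1 there is β₀ = β₀(K₂,K₃) > 0 with the following property for all 0 < β ≤ β₀: for every integer j ≥ 1, every real a with 0 ≤ a ≤ γ j^{−1} log j, every sequence of reals v_0 = 1, v_1, …, v_j with |v_i − v_{i−1}| ≤ K₂βi^{−θ+1} for 1 ≤ i ≤ j, and every complex numbers r_1, …, r_j with |r_i| ≤ K₃β(i^{−θ+1} + a·i^{−δ}) for 1 ≤ i ≤ j, one has |∏_{i=1}^j (1 − v_i a + r_i)| ≤ e^{CK₃β} · e^{−(1 − C(K₂+K₃)β) j a}. -/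
private lemma log_le_half (x : ℝ) (hx : 1 ≤ x) : Real.log x ≤ x / 2 := by
  have h0 : (0:ℝ) < x := by linarith
  have hs : Real.log x = 2 * Real.log (Real.sqrt x) := by
    rw [Real.log_sqrt h0.le]; ring
  have h1 : Real.log (Real.sqrt x) ≤ Real.sqrt x - 1 :=
    Real.log_le_sub_one_of_pos (Real.sqrt_pos.mpr h0)
  have h2 : Real.sqrt x ^ 2 = x := Real.sq_sqrt h0.le
  nlinarith [sq_nonneg (Real.sqrt x - 2)]

/-- (Lemma bounding the product representation.)
Fix `θ > 2`, `γ ∈ (0,1)` and `δ > 0`.  There exists a constant `C = C(θ,γ,δ) > 0` such that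
for all `K₂, K₃ > 1` there is `β₀ = β₀(K₂,K₃) > 0` with the following property for all
`0 < β ≤ β₀`: for every integer `j ≥ 1`, every real `a` with `0 ≤ a ≤ γ j^{−1} log j`, every
sequence of reals `v 0 = 1, v 1, …, v j` with `|v i − v (i−1)| ≤ K₂βi^{−θ+1}` for `1 ≤ i ≤ j`,
and every complex numbers `r 1, …, r j` with `|r i| ≤ K₃β(i^{−θ+1} + a·i^{−δ})` for
`1 ≤ i ≤ j`, one has
`|∏_{i=1}^j (1 − v i · a + r i)| ≤ e^{CK₃β} · e^{−(1 − C(K₂+K₃)β) j a}`. -/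
theorem product_representation_bound (θ γ δ : ℝ) (hθ : 2 < θ)
    (hγ : γ ∈ Set.Ioo (0 : ℝ) 1) (hδ : 0 < δ) :
    ∃ C : ℝ, 0 < C ∧ ∀ K₂ K₃ : ℝ, 1 < K₂ → 1 < K₃ → ∃ β₀ : ℝ, 0 < β₀ ∧
      ∀ β : ℝ, 0 < β → β ≤ β₀ →
        ∀ j : ℕ, 1 ≤ j → ∀ a : ℝ, 0 ≤ a → a ≤ γ * (j : ℝ)⁻¹ * Real.log j →
          ∀ v : ℕ → ℝ, v 0 = 1 →
            (∀ i : ℕ, 1 ≤ i → i ≤ j → |v i - v (i - 1)| ≤ K₂ * β * (i : ℝ) ^ (-θ + 1)) →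
            ∀ r : ℕ → ℂ,
              (∀ i : ℕ, 1 ≤ i → i ≤ j →
                ‖r i‖ ≤ K₃ * β * ((i : ℝ) ^ (-θ + 1) + a * (i : ℝ) ^ (-δ))) →
              ‖∏ i ∈ Finset.Icc 1 j, (((1 - v i * a : ℝ) : ℂ) + r i)‖ ≤
                Real.exp (C * K₃ * β) * Real.exp (-(1 - C * (K₂ + K₃) * β) * j * a) := by
  obtain ⟨hγ0, hγ1⟩ := hγ
  have hp : (-θ + 1) < -1 := by linarith
  have hsum : Summable (fun n : ℕ => (n:ℝ) ^ (-θ+1)) :=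
    (Real.summable_nat_rpow).mpr hp
  set S := ∑' n : ℕ, (n:ℝ) ^ (-θ+1) with hSdef
  have hterm : ∀ k : ℕ, 0 ≤ (k:ℝ) ^ (-θ+1) :=
    fun k => Real.rpow_nonneg (Nat.cast_nonneg k) _
  have hS1 : 1 ≤ S := by
    have := Summable.le_tsum hsum 1 (fun k _ => hterm k)
    simpa using this
  have hSpos : 0 < S := by linarith
  refine ⟨S + 1, by linarith, ?_⟩
  intro K₂ K₃ hK₂ hK₃
  have hK₂0 : 0 < K₂ := by linarith
  have hK₃0 : 0 < K₃ := by linarith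
  refine ⟨1 / (K₂ * S), by positivity, ?_⟩
  intro β hβ hββ₀ j hj a ha0 haj v hv0 hv r hr
  have hjR : (1:ℝ) ≤ (j:ℝ) := by exact_mod_cast hj
  have hjpos : (0:ℝ) < (j:ℝ) := by linarith
  -- a ≤ 1/2
  have ha2 : a ≤ 1/2 := by
    have hlog : Real.log j ≤ (j:ℝ)/2 := log_le_half _ hjR
    have hlog0 : 0 ≤ Real.log (j:ℝ) := Real.log_nonneg hjR
    have h1 : γ * (j:ℝ)⁻¹ * Real.log j ≤ 1 * (j:ℝ)⁻¹ * ((j:ℝ)/2) := by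
      have hji : (0:ℝ) < (j:ℝ)⁻¹ := by positivity
      apply mul_le_mul
      · apply mul_le_mul hγ1.le le_rfl hji.le (by norm_num)
      · exact hlog
      · exact hlog0
      · positivity
    have h2 : 1 * (j:ℝ)⁻¹ * ((j:ℝ)/2) = 1/2 := by
      field_simp
    linarith
  -- partial sums are bounded by S
  have hsle : ∀ i : ℕ, ∑ k ∈ Finset.Icc 1 i, (k:ℝ)^(-θ+1) ≤ S :=
    fun i => Summable.sum_le_tsum _ (fun k _ => hterm k) hsum
  -- K₂ β S ≤ 1
  have hKβS : K₂ * β * S ≤ 1 := by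
    have : β * (K₂ * S) ≤ (1 / (K₂ * S)) * (K₂ * S) :=
      mul_le_mul_of_nonneg_right hββ₀ (by positivity)
    rw [one_div_mul_cancel (by positivity)] at this
    linarith [this]
  -- |v i - 1| ≤ K₂ β S for all i ≤ j
  have hvtel : ∀ i : ℕ, i ≤ j → |v i - 1| ≤ K₂ * β * ∑ k ∈ Finset.Icc 1 i, (k:ℝ)^(-θ+1) := by
    intro i
    induction i with
    | zero => intro _; simp [hv0]
    | succ n ih =>
      intro hnj
      have h1 := hv (n+1) (by omega) hnj
      have h2 := ih (by omega)
      have hd : (n+1) - 1 = n := by omega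
      rw [hd] at h1
      have habs : |v (n+1) - 1| ≤ |v (n+1) - v n| + |v n - 1| := by
        have : v (n+1) - 1 = (v (n+1) - v n) + (v n - 1) := by ring
        rw [this]; exact abs_add_le _ _
      rw [Finset.sum_Icc_succ_top (by omega)]
      push_cast at h1 ⊢
      linarith
  have hv1 : ∀ i : ℕ, i ≤ j → |v i - 1| ≤ K₂ * β * S := by
    intro i hi
    refine (hvtel i hi).trans ?_
    exact mul_le_mul_of_nonneg_left (hsle i) (by positivity)
  -- pointwise bound
  have hpt : ∀ i ∈ Finset.Icc 1 j,
      ‖((1 - v i * a : ℝ) : ℂ) + r i‖ ≤ Real.exp (-(v i * a) + ‖r i‖) := by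
    intro i hi
    rw [Finset.mem_Icc] at hi
    have hvi := hv1 i hi.2
    have hvub : v i ≤ 2 := by
      have := abs_le.mp hvi
      linarith [this.2, hKβS]
    have hvlb : 0 ≤ v i := by
      have := abs_le.mp hvi
      linarith [this.1, hKβS]
    have hva : v i * a ≤ 1 := by
      calc v i * a ≤ 2 * (1/2) := mul_le_mul hvub ha2 ha0 (by norm_num)
      _ = 1 := by norm_num
    calc ‖((1 - v i * a : ℝ) : ℂ) + r i‖
        ≤ ‖((1 - v i * a : ℝ) : ℂ)‖ + ‖r i‖ := norm_add_le _ _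
      _ = (1 - v i * a) + ‖r i‖ := by
          rw [Complex.norm_real, Real.norm_eq_abs, abs_of_nonneg (by linarith)]
      _ = (-(v i * a) + ‖r i‖) + 1 := by ring
      _ ≤ Real.exp (-(v i * a) + ‖r i‖) := Real.add_one_le_exp _
  -- sum bound
  have hcard : (Finset.Icc 1 j).card = j := by
    rw [Nat.card_Icc]; omega
  have hSv : (j:ℝ) - (j:ℝ) * (K₂ * β * S) ≤ ∑ i ∈ Finset.Icc 1 j, v i := by
    have h1 : ∑ i ∈ Finset.Icc 1 j, (1 - (K₂ * β * S)) ≤ ∑ i ∈ Finset.Icc 1 j, v i := by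
      apply Finset.sum_le_sum
      intro i hi
      rw [Finset.mem_Icc] at hi
      have := abs_le.mp (hv1 i hi.2)
      linarith [this.1]
    rw [Finset.sum_const, hcard, nsmul_eq_mul] at h1
    linarith [h1]
  have hSd : ∑ i ∈ Finset.Icc 1 j, (i:ℝ)^(-δ) ≤ (j:ℝ) := by
    calc ∑ i ∈ Finset.Icc 1 j, (i:ℝ)^(-δ) ≤ ∑ i ∈ Finset.Icc 1 j, (1:ℝ) := by
          apply Finset.sum_le_sum
          intro i hi
          rw [Finset.mem_Icc] at hi
          exact Real.rpow_le_one_of_one_le_of_nonpos (by exact_mod_cast hi.1) (by linarith)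
      _ = (j:ℝ) := by rw [Finset.sum_const, hcard, nsmul_eq_mul, mul_one]
  have hSr : ∑ i ∈ Finset.Icc 1 j, ‖r i‖ ≤ K₃ * β * (S + a * j) := by
    have h1 : ∑ i ∈ Finset.Icc 1 j, ‖r i‖
        ≤ ∑ i ∈ Finset.Icc 1 j, (K₃ * β * (i:ℝ)^(-θ+1) + (K₃ * β * a) * (i:ℝ)^(-δ)) := by
      apply Finset.sum_le_sum
      intro i hi
      rw [Finset.mem_Icc] at hi
      have h := hr i hi.1 hi.2
      have heq : K₃ * β * ((i:ℝ)^(-θ+1) + a * (i:ℝ)^(-δ))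
          = K₃ * β * (i:ℝ)^(-θ+1) + (K₃ * β * a) * (i:ℝ)^(-δ) := by ring
      linarith [h, heq.le]
    rw [Finset.sum_add_distrib, ← Finset.mul_sum, ← Finset.mul_sum] at h1
    have h2 : K₃ * β * (∑ i ∈ Finset.Icc 1 j, (i:ℝ)^(-θ+1)) ≤ K₃ * β * S :=
      mul_le_mul_of_nonneg_left (hsle j) (by positivity)
    have h3 : (K₃ * β * a) * ∑ i ∈ Finset.Icc 1 j, (i:ℝ)^(-δ) ≤ (K₃ * β * a) * j :=
      mul_le_mul_of_nonneg_left hSd (by positivity)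
    nlinarith [h1, h2, h3]
  -- put everything together
  have hja : 0 ≤ (j:ℝ) * a := by positivity
  calc ‖∏ i ∈ Finset.Icc 1 j, (((1 - v i * a : ℝ) : ℂ) + r i)‖
      = ∏ i ∈ Finset.Icc 1 j, ‖((1 - v i * a : ℝ) : ℂ) + r i‖ := norm_prod _ _
    _ ≤ ∏ i ∈ Finset.Icc 1 j, Real.exp (-(v i * a) + ‖r i‖) :=
        Finset.prod_le_prod (fun i _ => norm_nonneg _) hpt
    _ = Real.exp (∑ i ∈ Finset.Icc 1 j, (-(v i * a) + ‖r i‖)) := (Real.exp_sum _ _).symm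
    _ ≤ Real.exp ((S+1) * K₃ * β + (-(1 - (S+1) * (K₂ + K₃) * β) * j * a)) := by
        apply Real.exp_le_exp.mpr
        have hsplit : ∑ i ∈ Finset.Icc 1 j, (-(v i * a) + ‖r i‖)
            = -((∑ i ∈ Finset.Icc 1 j, v i) * a) + ∑ i ∈ Finset.Icc 1 j, ‖r i‖ := by
          rw [Finset.sum_add_distrib, Finset.sum_mul, ← Finset.sum_neg_distrib]
        rw [hsplit]
        have h1 : -((∑ i ∈ Finset.Icc 1 j, v i) * a) ≤ -(((j:ℝ) - (j:ℝ) * (K₂ * β * S)) * a) := by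
          have := mul_le_mul_of_nonneg_right hSv ha0
          linarith
        have hβja : 0 ≤ β * ((j:ℝ) * a) := by positivity
        nlinarith [hSr, mul_nonneg hβ.le hja, mul_nonneg (mul_nonneg hβ.le hja) hSpos.le,
          mul_nonneg hβ.le hSpos.le, mul_pos hK₂0 hβ, mul_pos hK₃0 hβ]
    _ = Real.exp ((S+1) * K₃ * β) * Real.exp (-(1 - (S+1) * (K₂ + K₃) * β) * j * a) :=
        Real.exp_add _ _
end

section
/- (Radial integral estimate for the region R₃.) Let d ≥ 1 be an integer and let p ≥ 1, θ > 2, 0 < λ < θ and c₁, c₂ > 0 be reals. Then there exists a constant C = C(d,p,θ,λ,c₁,c₂) > 0 such that for all integers j ≥ 2 and all reals L ≥ 1: j^{−θp} L^{−2λp} ∫_{r₀}^{c₂/L} r^{d−1−2λp} dr ≤ C L^{−d} j^{−((d/2) ∧ (θp))}, where r₀ = √(c₁ (log j)/(L²j)) and the integral is interpreted as 0 when r₀ ≥ c₂/L. -/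
open MeasureTheory

/-- Auxiliary: the integral over an empty interval vanishes. -/
lemma radial_aux_empty {A B : ℝ} (hAB : B ≤ A) (β : ℝ) :
    (∫ r in Set.Ioc A B, r ^ β) = 0 := by
  rw [Set.Ioc_eq_empty (not_lt.mpr hAB), Measure.restrict_empty, integral_zero_measure]

/-- (Radial integral estimate for the region `R₃`.)
Let `d ≥ 1` and let `p ≥ 1`, `θ > 2`, `0 < λ < θ` and `c₁, c₂ > 0`.  Then there is a constant
`C = C(d,p,θ,λ,c₁,c₂) > 0` such that for all integers `j ≥ 2` and all reals `L ≥ 1`: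
`j^{−θp} L^{−2λp} ∫_{r₀}^{c₂/L} r^{d−1−2λp} dr ≤ C L^{−d} j^{−((d/2) ∧ (θp))}`,
where `r₀ = √(c₁ (log j)/(L²j))` (the integral over `Ioc r₀ (c₂/L)` being `0` when
`r₀ ≥ c₂/L`). -/
theorem radial_integral_estimate (d : ℕ) (hd : 1 ≤ d) (p θ lam c₁ c₂ : ℝ)
    (hp : 1 ≤ p) (hθ : 2 < θ) (hlam0 : 0 < lam) (hlamθ : lam < θ)
    (hc₁ : 0 < c₁) (hc₂ : 0 < c₂) :
    ∃ C : ℝ, 0 < C ∧ ∀ j : ℕ, 2 ≤ j → ∀ L : ℝ, 1 ≤ L →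
      (j : ℝ) ^ (-(θ * p)) * L ^ (-(2 * lam * p)) *
          ∫ r in Set.Ioc (Real.sqrt (c₁ * Real.log j / (L ^ 2 * j))) (c₂ / L),
            r ^ ((d : ℝ) - 1 - 2 * lam * p)
        ≤ C * L ^ (-(d : ℝ)) * (j : ℝ) ^ (-(min ((d : ℝ) / 2) (θ * p))) := by
  have hp0 : (0:ℝ) < p := lt_of_lt_of_le one_pos hp
  have hθ0 : (0:ℝ) < θ := by linarith
  have hθp : 0 < θ * p := mul_pos hθ0 hp0
  have hlamp_lt : lam * p < θ * p := by nlinarith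
  have hmin₁ : min ((d:ℝ)/2) (θ*p) ≤ (d:ℝ)/2 := min_le_left _ _
  have hmin₂ : min ((d:ℝ)/2) (θ*p) ≤ θ*p := min_le_right _ _
  have hlog2 : (0:ℝ) < Real.log 2 := Real.log_pos one_lt_two
  rcases lt_trichotomy ((d:ℝ) - 2 * lam * p) 0 with hα | hα | hα
  -- Case α < 0
  · have hCpos : (0:ℝ) < c₁ ^ (((d:ℝ) - 2*lam*p)/2) * (Real.log 2) ^ (((d:ℝ) - 2*lam*p)/2) /
        (-((d:ℝ) - 2*lam*p)) := by
      have h1 := Real.rpow_pos_of_pos hc₁ (((d:ℝ) - 2*lam*p)/2)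
      have h2 := Real.rpow_pos_of_pos hlog2 (((d:ℝ) - 2*lam*p)/2)
      have h3 : 0 < -((d:ℝ) - 2*lam*p) := by linarith
      exact div_pos (mul_pos h1 h2) h3
    refine ⟨_, hCpos, ?_⟩
    intro j hj L hL
    set α : ℝ := (d:ℝ) - 2*lam*p with hαdef
    have hL0 : (0:ℝ) < L := lt_of_lt_of_le one_pos hL
    have hj1 : (1:ℝ) ≤ j := by exact_mod_cast Nat.one_le_of_lt hj
    have hj0 : (0:ℝ) < j := lt_of_lt_of_le one_pos hj1
    have hlogj : Real.log 2 ≤ Real.log j :=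
      Real.log_le_log (by norm_num) (by exact_mod_cast hj)
    have hlogj0 : 0 < Real.log j := lt_of_lt_of_le hlog2 hlogj
    set A := Real.sqrt (c₁ * Real.log j / (L ^ 2 * j)) with hA
    have hA0 : 0 < A := Real.sqrt_pos.mpr (by positivity)
    have hB0 : 0 < c₂ / L := by positivity
    have hnegα : 0 < -α := by rw [hαdef]; linarith
    have hLd : (0:ℝ) < L ^ (-(d:ℝ)) := Real.rpow_pos_of_pos hL0 _
    have hjmin : (0:ℝ) < (j:ℝ) ^ (-(min ((d:ℝ)/2) (θ*p))) := Real.rpow_pos_of_pos hj0 _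
    rcases le_or_gt (c₂ / L) A with hAB | hAB
    · rw [radial_aux_empty hAB, mul_zero]
      exact le_of_lt (mul_pos (mul_pos hCpos hLd) hjmin)
    · have hβne : (d:ℝ) - 1 - 2*lam*p ≠ -1 := by
        intro h; rw [hαdef] at hα; linarith [hα]
      have hval : (∫ r in Set.Ioc A (c₂/L), r ^ ((d:ℝ) - 1 - 2*lam*p))
          = ((c₂/L) ^ α - A ^ α) / α := by
        rw [← intervalIntegral.integral_of_le hAB.le,
          integral_rpow (Or.inr ⟨hβne, Set.notMem_uIcc_of_lt hA0 hB0⟩)]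
        have e : (d:ℝ) - 1 - 2*lam*p + 1 = α := by rw [hαdef]; ring
        rw [e]
      have hIle : (∫ r in Set.Ioc A (c₂/L), r ^ ((d:ℝ) - 1 - 2*lam*p)) ≤ A ^ α / (-α) := by
        rw [hval]
        have h1 : ((c₂/L) ^ α - A ^ α) / α = (A ^ α - (c₂/L) ^ α) / (-α) := by
          rw [div_neg, ← neg_div, neg_sub]
        rw [h1]
        have h2 : A ^ α - (c₂/L) ^ α ≤ A ^ α := by
          have := Real.rpow_nonneg hB0.le α; linarith
        exact div_le_div_of_nonneg_right h2 hnegα.le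
      -- Upper bound for A ^ α
      have hx0 : (0:ℝ) < c₁ * Real.log j / (L^2*j) := by positivity
      have hy0 : (0:ℝ) < c₁ * Real.log 2 / (L^2*j) := by positivity
      have hAx : A ^ α = (c₁ * Real.log j / (L^2*j)) ^ (α/2) := by
        rw [hA, Real.sqrt_eq_rpow, ← Real.rpow_mul hx0.le]
        congr 1; ring
      have hxy : (c₁ * Real.log j / (L^2*j)) ^ (α/2) ≤ (c₁ * Real.log 2 / (L^2*j)) ^ (α/2) :=
        Real.rpow_le_rpow_of_nonpos hy0 (by gcongr) (by linarith)
      have hydec : (c₁ * Real.log 2 / (L^2*j)) ^ (α/2)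
          = c₁^(α/2) * (Real.log 2)^(α/2) * L^(-α) * (j:ℝ)^(-(α/2)) := by
        rw [Real.div_rpow (by positivity) (by positivity),
          Real.mul_rpow hc₁.le hlog2.le, Real.mul_rpow (by positivity) hj0.le,
          ← Real.rpow_natCast L 2, ← Real.rpow_mul hL0.le]
        push_cast
        rw [show (2:ℝ) * (α/2) = α by ring, Real.rpow_neg hL0.le, Real.rpow_neg hj0.le,
          div_eq_mul_inv, mul_inv]
        ring
      have hAub : A ^ α ≤ c₁^(α/2) * (Real.log 2)^(α/2) * L^(-α) * (j:ℝ)^(-(α/2)) := by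
        rw [hAx, ← hydec]; exact hxy
      have hLexp : L ^ (-(2*lam*p)) * L ^ (-α) = L ^ (-(d:ℝ)) := by
        rw [← Real.rpow_add hL0]; congr 1; rw [hαdef]; ring
      have hjexp : (j:ℝ) ^ (-(θ*p)) * (j:ℝ) ^ (-(α/2)) = (j:ℝ) ^ (-(θ*p) + -(α/2)) :=
        (Real.rpow_add hj0 _ _).symm
      have hjle : (j:ℝ) ^ (-(θ*p) + -(α/2)) ≤ (j:ℝ) ^ (-(min ((d:ℝ)/2) (θ*p))) := by
        apply Real.rpow_le_rpow_of_exponent_le hj1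
        rw [hαdef]; linarith [hmin₁, hlamp_lt]
      calc (j:ℝ) ^ (-(θ*p)) * L ^ (-(2*lam*p)) *
              ∫ r in Set.Ioc A (c₂/L), r ^ ((d:ℝ) - 1 - 2*lam*p)
          ≤ (j:ℝ) ^ (-(θ*p)) * L ^ (-(2*lam*p)) * (A ^ α / (-α)) := by
            apply mul_le_mul_of_nonneg_left hIle (by positivity)
        _ ≤ (j:ℝ) ^ (-(θ*p)) * L ^ (-(2*lam*p)) *
              (c₁^(α/2) * (Real.log 2)^(α/2) * L^(-α) * (j:ℝ)^(-(α/2)) / (-α)) := by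
            apply mul_le_mul_of_nonneg_left _ (by positivity)
            exact div_le_div_of_nonneg_right hAub hnegα.le
        _ = (c₁^(α/2) * (Real.log 2)^(α/2) / (-α)) * L ^ (-(d:ℝ)) *
              (j:ℝ) ^ (-(θ*p) + -(α/2)) := by
            rw [← hLexp, ← hjexp]; ring
        _ ≤ (c₁^(α/2) * (Real.log 2)^(α/2) / (-α)) * L ^ (-(d:ℝ)) *
              (j:ℝ) ^ (-(min ((d:ℝ)/2) (θ*p))) := by
            apply mul_le_mul_of_nonneg_left hjle
            exact le_of_lt (mul_pos hCpos hLd)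
  -- Case α = 0
  · have hε : 0 < (θ - lam) * p := mul_pos (by linarith) hp0
    have hs0 : 0 < Real.sqrt (c₁ * Real.log 2) := Real.sqrt_pos.mpr (by positivity)
    have hC₀ : 0 < c₂ / Real.sqrt (c₁ * Real.log 2) := div_pos hc₂ hs0
    have hCpos : 0 < (c₂ / Real.sqrt (c₁ * Real.log 2)) ^ ((θ - lam) * p) / ((θ - lam) * p) :=
      div_pos (Real.rpow_pos_of_pos hC₀ _) hε
    refine ⟨_, hCpos, ?_⟩
    intro j hj L hL
    have hL0 : (0:ℝ) < L := lt_of_lt_of_le one_pos hL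
    have hj1 : (1:ℝ) ≤ j := by exact_mod_cast Nat.one_le_of_lt hj
    have hj0 : (0:ℝ) < j := lt_of_lt_of_le one_pos hj1
    have hlogj : Real.log 2 ≤ Real.log j :=
      Real.log_le_log (by norm_num) (by exact_mod_cast hj)
    have hlogj0 : 0 < Real.log j := lt_of_lt_of_le hlog2 hlogj
    set A := Real.sqrt (c₁ * Real.log j / (L ^ 2 * j)) with hA
    have hA0 : 0 < A := Real.sqrt_pos.mpr (by positivity)
    have hB0 : 0 < c₂ / L := by positivity
    have hLd : (0:ℝ) < L ^ (-(d:ℝ)) := Real.rpow_pos_of_pos hL0 _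
    have hjmin : (0:ℝ) < (j:ℝ) ^ (-(min ((d:ℝ)/2) (θ*p))) := Real.rpow_pos_of_pos hj0 _
    rcases le_or_gt (c₂ / L) A with hAB | hAB
    · rw [radial_aux_empty hAB, mul_zero]
      exact le_of_lt (mul_pos (mul_pos hCpos hLd) hjmin)
    · have hβ : (d:ℝ) - 1 - 2*lam*p = -1 := by linarith
      have hint : (∫ r in Set.Ioc A (c₂/L), r ^ ((d:ℝ) - 1 - 2*lam*p))
          = Real.log ((c₂/L) / A) := by
        rw [hβ]
        simp_rw [Real.rpow_neg_one]
        rw [← intervalIntegral.integral_of_le hAB.le]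
        exact integral_inv_of_pos hA0 hB0
      have hA_lb : Real.sqrt (c₁ * Real.log 2) / (L * Real.sqrt j) ≤ A := by
        have h1 : Real.sqrt (c₁ * Real.log 2 / (L^2 * j)) ≤ A := by
          rw [hA]; exact Real.sqrt_le_sqrt (by gcongr)
        refine le_trans (le_of_eq ?_) h1
        rw [Real.sqrt_div (by positivity : (0:ℝ) ≤ c₁ * Real.log 2),
          Real.sqrt_mul (sq_nonneg L), Real.sqrt_sq hL0.le]
      have hsqrtj : Real.sqrt j ≤ (j:ℝ) := by
        calc Real.sqrt j ≤ Real.sqrt ((j:ℝ)^2) := Real.sqrt_le_sqrt (by nlinarith)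
          _ = (j:ℝ) := Real.sqrt_sq hj0.le
      have hBA : (c₂/L) / A ≤ (c₂ / Real.sqrt (c₁ * Real.log 2)) * j := by
        have h2 : (c₂/L)/A ≤ (c₂/L) / (Real.sqrt (c₁ * Real.log 2)/(L*Real.sqrt j)) :=
          div_le_div_of_nonneg_left hB0.le (by positivity) hA_lb
        have h3 : (c₂/L) / (Real.sqrt (c₁ * Real.log 2)/(L*Real.sqrt j))
            = (c₂ / Real.sqrt (c₁ * Real.log 2)) * Real.sqrt j := by
          field_simp
        calc (c₂/L)/A ≤ _ := h2
          _ = (c₂ / Real.sqrt (c₁ * Real.log 2)) * Real.sqrt j := h3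
          _ ≤ (c₂ / Real.sqrt (c₁ * Real.log 2)) * j := by gcongr
      have hlogle : Real.log ((c₂/L)/A)
          ≤ ((c₂ / Real.sqrt (c₁ * Real.log 2)) ^ ((θ - lam) * p) * (j:ℝ) ^ ((θ - lam) * p))
            / ((θ - lam) * p) := by
        refine le_trans (Real.log_le_rpow_div (by positivity) hε) ?_
        have h4 : ((c₂/L)/A) ^ ((θ - lam) * p)
            ≤ ((c₂ / Real.sqrt (c₁ * Real.log 2)) * j) ^ ((θ - lam) * p) :=
          Real.rpow_le_rpow (by positivity) hBA hε.le
        rw [Real.mul_rpow hC₀.le hj0.le] at h4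
        exact div_le_div_of_nonneg_right h4 hε.le
      have hLdeq : L ^ (-(2*lam*p)) = L ^ (-(d:ℝ)) := by
        congr 1; linarith
      have hjsum : (j:ℝ) ^ (-(θ*p)) * (j:ℝ) ^ ((θ - lam) * p)
          = (j:ℝ) ^ (-(θ*p) + (θ - lam) * p) := (Real.rpow_add hj0 _ _).symm
      have hjle : (j:ℝ) ^ (-(θ*p) + (θ - lam) * p) ≤ (j:ℝ) ^ (-(min ((d:ℝ)/2) (θ*p))) := by
        apply Real.rpow_le_rpow_of_exponent_le hj1
        have h5 : min ((d:ℝ)/2) (θ*p) ≤ lam * p := by linarith [hmin₁]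
        have h6 : -(θ*p) + (θ - lam) * p = -(lam * p) := by ring
        rw [h6]
        linarith [h5]
      rw [hint]
      calc (j:ℝ) ^ (-(θ*p)) * L ^ (-(2*lam*p)) * Real.log ((c₂/L)/A)
          ≤ (j:ℝ) ^ (-(θ*p)) * L ^ (-(2*lam*p)) *
            (((c₂ / Real.sqrt (c₁ * Real.log 2)) ^ ((θ - lam) * p) * (j:ℝ) ^ ((θ - lam) * p))
              / ((θ - lam) * p)) := by
            apply mul_le_mul_of_nonneg_left hlogle (by positivity)
        _ = ((c₂ / Real.sqrt (c₁ * Real.log 2)) ^ ((θ - lam) * p) / ((θ - lam) * p)) *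
              L ^ (-(d:ℝ)) * (j:ℝ) ^ (-(θ*p) + (θ - lam) * p) := by
            rw [← hLdeq, ← hjsum]; ring
        _ ≤ _ := by
            apply mul_le_mul_of_nonneg_left hjle
            exact le_of_lt (mul_pos hCpos hLd)
  -- Case α > 0
  · have hCpos : (0:ℝ) < c₂ ^ ((d:ℝ) - 2*lam*p) / ((d:ℝ) - 2*lam*p) :=
      div_pos (Real.rpow_pos_of_pos hc₂ _) hα
    refine ⟨_, hCpos, ?_⟩
    intro j hj L hL
    set α : ℝ := (d:ℝ) - 2*lam*p with hαdef
    have hL0 : (0:ℝ) < L := lt_of_lt_of_le one_pos hL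
    have hj1 : (1:ℝ) ≤ j := by exact_mod_cast Nat.one_le_of_lt hj
    have hj0 : (0:ℝ) < j := lt_of_lt_of_le one_pos hj1
    have hlogj : Real.log 2 ≤ Real.log j :=
      Real.log_le_log (by norm_num) (by exact_mod_cast hj)
    have hlogj0 : 0 < Real.log j := lt_of_lt_of_le hlog2 hlogj
    set A := Real.sqrt (c₁ * Real.log j / (L ^ 2 * j)) with hA
    have hA0 : 0 < A := Real.sqrt_pos.mpr (by positivity)
    have hB0 : 0 < c₂ / L := by positivity
    have hLd : (0:ℝ) < L ^ (-(d:ℝ)) := Real.rpow_pos_of_pos hL0 _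
    have hβ : (-1:ℝ) < (d:ℝ) - 1 - 2*lam*p := by rw [hαdef] at hα; linarith
    have h1 : (∫ r in Set.Ioc A (c₂/L), r ^ ((d:ℝ) - 1 - 2*lam*p))
        ≤ ∫ r in Set.Ioc 0 (c₂/L), r ^ ((d:ℝ) - 1 - 2*lam*p) := by
      apply setIntegral_mono_set
      · exact (intervalIntegral.intervalIntegrable_rpow' hβ).1
      · exact Filter.eventually_of_mem (self_mem_ae_restrict measurableSet_Ioc)
          (fun r hr => Real.rpow_nonneg hr.1.le _)
      · exact (Set.Ioc_subset_Ioc_left hA0.le).eventuallyLE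
    have h2 : (∫ r in Set.Ioc 0 (c₂/L), r ^ ((d:ℝ) - 1 - 2*lam*p)) = (c₂/L) ^ α / α := by
      rw [← intervalIntegral.integral_of_le hB0.le, integral_rpow (Or.inl hβ)]
      rw [show (d:ℝ) - 1 - 2*lam*p + 1 = α from by rw [hαdef]; ring,
        Real.zero_rpow (ne_of_gt hα), sub_zero]
    have hBα : (c₂/L) ^ α = c₂ ^ α * L ^ (-α) := by
      rw [Real.div_rpow hc₂.le hL0.le, Real.rpow_neg hL0.le, div_eq_mul_inv]
    have hLexp : L ^ (-(2*lam*p)) * L ^ (-α) = L ^ (-(d:ℝ)) := by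
      rw [← Real.rpow_add hL0]; congr 1; rw [hαdef]; ring
    have hjle : (j:ℝ) ^ (-(θ*p)) ≤ (j:ℝ) ^ (-(min ((d:ℝ)/2) (θ*p))) :=
      Real.rpow_le_rpow_of_exponent_le hj1 (neg_le_neg hmin₂)
    calc (j:ℝ) ^ (-(θ*p)) * L ^ (-(2*lam*p)) *
            ∫ r in Set.Ioc A (c₂/L), r ^ ((d:ℝ) - 1 - 2*lam*p)
        ≤ (j:ℝ) ^ (-(θ*p)) * L ^ (-(2*lam*p)) * ((c₂/L) ^ α / α) := by
          apply mul_le_mul_of_nonneg_left (h1.trans_eq h2) (by positivity)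
      _ = (c₂ ^ α / α) * L ^ (-(d:ℝ)) * (j:ℝ) ^ (-(θ*p)) := by
          rw [hBα, ← hLexp]; ring
      _ ≤ (c₂ ^ α / α) * L ^ (-(d:ℝ)) * (j:ℝ) ^ (-(min ((d:ℝ)/2) (θ*p))) := by
          apply mul_le_mul_of_nonneg_left hjle
          exact le_of_lt (mul_pos hCpos hLd)
end
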